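/- Let a < b, let n ≥ 1, and let f ∈ C^{n−1}([a,b]) be such that f^{(n)}(x) exists at every x ∈ (a,b). Let s_1, …, s_n ⊆ [a,b] be nondegenerate segments with pairwise disjoint interiors, and let p ∈ ℙ_{n−1} satisfy the histopolation conditions μ_{s_i}(p) = μ_{s_i}(f) for i = 1, …, n. Then there exist points ξ_i ∈ s_i, i = 1, …, n, such that for every x ∈ [a,b] there exists ξ̄ ∈ [a,b] with f(x) − p(x) = (∏_{i=1}^n (x − ξ_i)) / n! · f^{(n)}(ξ̄). -/

import Mathlib

open Real Set Polynomial

/-- Segmental average: `μ_[a,b](f) = (b-a)⁻¹ ∫_a^b f`. -/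
noncomputable def segAvg (a b : ℝ) (f : ℝ → ℝ) : ℝ := (b - a)⁻¹ * ∫ x in a..b, f x

section Aux

open MeasureTheory

lemma poly_contDiff (q : Polynomial ℝ) (n : ℕ∞) : ContDiff ℝ n (fun x => q.eval x) := by
  induction q using Polynomial.induction_on with
  | C c => simpa using contDiff_const
  | add p r hp hr => simpa [eval_add] using hp.add hr
  | monomial m c ih =>
    simp only [eval_mul, eval_pow, eval_C, eval_X]
    exact contDiff_const.mul (contDiff_id.pow _)

lemma exists_zero_of_integral_zero {g : ℝ → ℝ} {α β : ℝ} (hαβ : α < β)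
    (hc : ContinuousOn g (Set.Icc α β)) (hca : ∀ x ∈ Set.Ioo α β, ContinuousAt g x)
    (hint : (∫ x in α..β, g x) = 0) : ∃ c ∈ Set.Ioo α β, g c = 0 := by
  have hgi : IntervalIntegrable g volume α β := hc.intervalIntegrable_of_Icc hαβ.le
  have hFc : ContinuousOn (fun t => ∫ x in α..t, g x) (Set.Icc α β) := by
    have := intervalIntegral.continuousOn_primitive_interval' hgi
      (Set.left_mem_uIcc (a := α) (b := β))
    rwa [Set.uIcc_of_le hαβ.le] at this
  have key : ∀ t ∈ Set.Ioo α β, HasDerivAt (fun u => ∫ x in α..u, g x) (g t) t := by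
    intro t ht
    refine intervalIntegral.integral_hasDerivAt_right (hgi.mono_set ?_) ?_ (hca t ht)
    · rw [Set.uIcc_of_le ht.1.le, Set.uIcc_of_le hαβ.le]
      exact Set.Icc_subset_Icc le_rfl ht.2.le
    · exact ContinuousAt.stronglyMeasurableAtFilter isOpen_Ioo hca t ht
  obtain ⟨c, hc1, hc2⟩ := exists_hasDerivAt_eq_zero hαβ hFc
    (by simp [intervalIntegral.integral_same, hint]) key
  exact ⟨c, hc1, hc2⟩

lemma iterated_rolle (a b : ℝ) (hab : a < b) :
    ∀ (m : ℕ) (h : ℝ → ℝ), ContDiffOn ℝ m h (Set.Icc a b) →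
    (∀ x ∈ Set.Ioo a b,
      DifferentiableWithinAt ℝ (iteratedDerivWithin m h (Set.Icc a b)) (Set.Icc a b) x) →
    ∀ t : Fin (m + 2) → ℝ, StrictMono t → (∀ i, t i ∈ Set.Icc a b) → (∀ i, h (t i) = 0) →
    ∃ c ∈ Set.Ioo a b, iteratedDerivWithin (m + 1) h (Set.Icc a b) c = 0 := by
  have hud : UniqueDiffOn ℝ (Set.Icc a b) := uniqueDiffOn_Icc hab
  intro m
  induction m with
  | zero =>
    intro h hcd hd t hmono htm htz
    have h01 : t 0 < t 1 := hmono (by norm_num)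
    have hdiff : ∀ x ∈ Set.Ioo (t 0) (t 1), HasDerivAt h (deriv h x) x := by
      intro x hx
      have hxab : x ∈ Set.Ioo a b := ⟨(htm 0).1.trans_lt hx.1, hx.2.trans_le (htm 1).2⟩
      have : DifferentiableWithinAt ℝ h (Set.Icc a b) x := by
        have := hd x hxab
        simpa using this
      exact (this.differentiableAt (Icc_mem_nhds hxab.1 hxab.2)).hasDerivAt
    obtain ⟨c, hc1, hc2⟩ := exists_hasDerivAt_eq_zero h01
      ((hcd.continuousOn).mono (Set.Icc_subset_Icc (htm 0).1 (htm 1).2))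
      (by rw [htz 0, htz 1]) hdiff
    have hcab : c ∈ Set.Ioo a b := ⟨(htm 0).1.trans_lt hc1.1, hc1.2.trans_le (htm 1).2⟩
    refine ⟨c, hcab, ?_⟩
    rw [iteratedDerivWithin_succ]
    have : iteratedDerivWithin 0 h (Set.Icc a b) = h := by funext y; simp
    rw [this, derivWithin_of_mem_nhds (Icc_mem_nhds hcab.1 hcab.2), hc2]
  | succ m ih =>
    intro h hcd hd t hmono htm htz
    have hz : ∀ i : Fin (m + 2), ∃ c ∈ Set.Ioo (t i.castSucc) (t i.succ),
        derivWithin h (Set.Icc a b) c = 0 := by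
      intro i
      have hlt : t i.castSucc < t i.succ := hmono Fin.castSucc_lt_succ
      have hdiff : ∀ x ∈ Set.Ioo (t i.castSucc) (t i.succ), HasDerivAt h (deriv h x) x := by
        intro x hx
        have hxab : x ∈ Set.Ioo a b :=
          ⟨(htm i.castSucc).1.trans_lt hx.1, hx.2.trans_le (htm i.succ).2⟩
        have : DifferentiableWithinAt ℝ h (Set.Icc a b) x :=
          hcd.differentiableOn (by simp) x
            (Set.Ioo_subset_Icc_self hxab)
        exact (this.differentiableAt (Icc_mem_nhds hxab.1 hxab.2)).hasDerivAt
      obtain ⟨c, hc1, hc2⟩ := exists_hasDerivAt_eq_zero hlt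
        ((hcd.continuousOn).mono (Set.Icc_subset_Icc (htm i.castSucc).1 (htm i.succ).2))
        (by rw [htz i.castSucc, htz i.succ]) hdiff
      have hcab : c ∈ Set.Ioo a b := ⟨(htm i.castSucc).1.trans_lt hc1.1,
        hc1.2.trans_le (htm i.succ).2⟩
      exact ⟨c, hc1, by rw [derivWithin_of_mem_nhds (Icc_mem_nhds hcab.1 hcab.2), hc2]⟩
    choose c hcmem hcz using hz
    have hcab : ∀ i, c i ∈ Set.Ioo a b := fun i =>
      ⟨(htm i.castSucc).1.trans_lt (hcmem i).1, (hcmem i).2.trans_le (htm i.succ).2⟩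
    have hcmono : StrictMono c := by
      intro i j hij
      calc c i < t i.succ := (hcmem i).2
        _ ≤ t j.castSucc := hmono.monotone (by
            simp only [Fin.le_def, Fin.val_succ, Fin.coe_castSucc]
            omega)
        _ < c j := (hcmem j).1
    set h1 := derivWithin h (Set.Icc a b) with hh1
    have hcd1 : ContDiffOn ℝ m h1 (Set.Icc a b) := by
      apply hcd.derivWithin hud
      norm_cast
    have hd1 : ∀ x ∈ Set.Ioo a b,
        DifferentiableWithinAt ℝ (iteratedDerivWithin m h1 (Set.Icc a b)) (Set.Icc a b) x := by
      intro x hx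
      refine (hd x hx).congr (fun y hy => ?_) ?_
      · exact (congrFun (iteratedDerivWithin_succ' (f := h)) y).symm
      · exact (congrFun (iteratedDerivWithin_succ' (f := h)) x).symm
    obtain ⟨d, hd1m, hd2⟩ := ih h1 hcd1 hd1 c hcmono
      (fun i => Set.Ioo_subset_Icc_self (hcab i)) hcz
    refine ⟨d, hd1m, ?_⟩
    rw [iteratedDerivWithin_succ']
    exact hd2

lemma transfer_A (a b : ℝ) (hab : a < b) (m : ℕ) (f : ℝ → ℝ)
    (hf : ContDiffOn ℝ m f (Set.Icc a b)) (q : Polynomial ℝ) :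
    ∀ k ≤ m, ∀ x ∈ Set.Icc a b,
      iteratedDerivWithin k (fun z => f z - q.eval z) (Set.Icc a b) x =
        iteratedDerivWithin k f (Set.Icc a b) x - (derivative^[k] q).eval x := by
  have hud : UniqueDiffOn ℝ (Set.Icc a b) := uniqueDiffOn_Icc hab
  intro k
  induction k with
  | zero => intro _ x hx; simp
  | succ k ih =>
    intro hk x hx
    have hk' : k ≤ m := Nat.le_of_succ_le hk
    rw [iteratedDerivWithin_succ]
    have hcongr : derivWithin (iteratedDerivWithin k (fun z => f z - q.eval z) (Set.Icc a b))
        (Set.Icc a b) x = derivWithin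
        (fun y => iteratedDerivWithin k f (Set.Icc a b) y - (derivative^[k] q).eval y)
        (Set.Icc a b) x :=
      derivWithin_congr (fun y hy => ih hk' y hy) (ih hk' x hx)
    rw [hcongr]
    have hdf : DifferentiableWithinAt ℝ (iteratedDerivWithin k f (Set.Icc a b))
        (Set.Icc a b) x :=
      hf.differentiableOn_iteratedDerivWithin (by exact_mod_cast hk) hud x hx
    have hdq : DifferentiableWithinAt ℝ (fun y => (derivative^[k] q).eval y)
        (Set.Icc a b) x :=
      (Polynomial.differentiable _).differentiableAt.differentiableWithinAt
    rw [derivWithin_fun_sub hdf hdq]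
    rw [← iteratedDerivWithin_succ]
    rw [(derivative^[k] q).derivWithin (hud x hx), Function.iterate_succ_apply']

lemma iterate_derivative_of_natDegree_le (q : Polynomial ℝ) (n : ℕ) (h : q.natDegree ≤ n) :
    derivative^[n] q = C ((n.factorial : ℝ) * q.coeff n) := by
  have h0 : (derivative^[n] q).natDegree ≤ 0 :=
    (natDegree_iterate_derivative q n).trans (by omega)
  rw [Polynomial.eq_C_of_natDegree_le_zero h0, coeff_iterate_derivative]
  simp [Nat.descFactorial_self, mul_comm]

lemma monic_prod_roots (n : ℕ) (ξ : Fin n → ℝ) :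
    (derivative^[n] (∏ i, (X - C (ξ i))) : Polynomial ℝ) = C (n.factorial : ℝ) := by
  have hm : (∏ i, (X - C (ξ i)) : Polynomial ℝ).Monic :=
    monic_prod_of_monic _ _ (fun i _ => monic_X_sub_C (ξ i))
  have hdeg : (∏ i, (X - C (ξ i)) : Polynomial ℝ).natDegree = n := by
    rw [natDegree_prod _ _ (fun i _ => X_sub_C_ne_zero (ξ i))]
    simp [natDegree_X_sub_C]
  rw [iterate_derivative_of_natDegree_le _ n hdeg.le]
  have : (∏ i, (X - C (ξ i)) : Polynomial ℝ).coeff n = 1 := by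
    have := hm.coeff_natDegree
    rwa [hdeg] at this
  rw [this, mul_one]

lemma iter_derivative_add (p q : Polynomial ℝ) (k : ℕ) :
    derivative^[k] (p + q) = derivative^[k] p + derivative^[k] q := by
  induction k with
  | zero => simp
  | succ k ih => simp [Function.iterate_succ_apply', ih]

end Aux

/-- Error representation formula for histopolation on segments with pairwise disjoint
interiors (Proposition 1). -/
theorem stmt_0 (a b : ℝ) (hab : a < b) (n : ℕ) (hn : 1 ≤ n) (f : ℝ → ℝ)
    (hf : ContDiffOn ℝ (n - 1 : ℕ) f (Set.Icc a b))
    (hf' : ∀ x ∈ Set.Ioo a b,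
      DifferentiableWithinAt ℝ (iteratedDerivWithin (n - 1) f (Set.Icc a b)) (Set.Icc a b) x)
    (lo hi : Fin n → ℝ)
    (hseg : ∀ i, lo i < hi i)
    (hsub : ∀ i, Set.Icc (lo i) (hi i) ⊆ Set.Icc a b)
    (hdisj : ∀ i j, i ≠ j → Set.Ioo (lo i) (hi i) ∩ Set.Ioo (lo j) (hi j) = ∅)
    (p : Polynomial ℝ) (hp : p ∈ Polynomial.degreeLT ℝ n)
    (hinterp : ∀ i, segAvg (lo i) (hi i) (fun x => p.eval x) = segAvg (lo i) (hi i) f) :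
    ∃ ξ : Fin n → ℝ, (∀ i, ξ i ∈ Set.Icc (lo i) (hi i)) ∧
      ∀ x ∈ Set.Icc a b, ∃ ξb ∈ Set.Icc a b,
        f x - p.eval x =
          (∏ i, (x - ξ i)) / (n.factorial : ℝ) * iteratedDerivWithin n f (Set.Icc a b) ξb := by
  obtain ⟨m, rfl⟩ : ∃ m, n = m + 1 := ⟨n - 1, (Nat.succ_pred_eq_of_pos hn).symm⟩
  simp only [Nat.add_sub_cancel] at hf hf'
  have hud : UniqueDiffOn ℝ (Set.Icc a b) := uniqueDiffOn_Icc hab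
  have hfc : ContinuousOn f (Set.Icc a b) := hf.continuousOn
  have hIoo : ∀ i, Set.Ioo (lo i) (hi i) ⊆ Set.Ioo a b := by
    intro i y hy
    have h1 := (hsub i) (Set.left_mem_Icc.mpr (hseg i).le)
    have h2 := (hsub i) (Set.right_mem_Icc.mpr (hseg i).le)
    exact ⟨h1.1.trans_lt hy.1, hy.2.trans_le h2.2⟩
  -- Step 1: find ξ i with f (ξ i) = p (ξ i)
  have hξ : ∀ i, ∃ c ∈ Set.Ioo (lo i) (hi i), f c - p.eval c = 0 := by
    intro i
    apply exists_zero_of_integral_zero (hseg i)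
    · exact (hfc.sub (poly_contDiff p ⊤).continuous.continuousOn).mono (hsub i)
    · intro y hy
      exact ((hfc.sub (poly_contDiff p ⊤).continuous.continuousOn)).continuousAt
        (Icc_mem_nhds (hIoo i hy).1 (hIoo i hy).2)
    · have hfi : IntervalIntegrable f MeasureTheory.volume (lo i) (hi i) :=
        (hfc.mono (hsub i)).intervalIntegrable_of_Icc (hseg i).le
      have hpi : IntervalIntegrable (fun x => p.eval x) MeasureTheory.volume (lo i) (hi i) :=
        ((poly_contDiff p ⊤).continuous.continuousOn).intervalIntegrable_of_Icc (hseg i).le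
      have hint := hinterp i
      unfold segAvg at hint
      have hne : ((hi i) - (lo i))⁻¹ ≠ 0 := inv_ne_zero (sub_ne_zero.mpr (hseg i).ne')
      have heq : (∫ x in (lo i)..(hi i), p.eval x) = ∫ x in (lo i)..(hi i), f x :=
        mul_left_cancel₀ hne hint
      rw [intervalIntegral.integral_sub hfi hpi, heq, sub_self]
  choose ξ hξmem hξzero using hξ
  refine ⟨ξ, fun i => Set.Ioo_subset_Icc_self (hξmem i), ?_⟩
  intro x hx
  by_cases h0 : (∏ i, (x - ξ i)) = 0
  · obtain ⟨i, -, hi0⟩ := Finset.prod_eq_zero_iff.mp h0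
    have hxi : x = ξ i := by linarith [sub_eq_zero.mp hi0]
    refine ⟨a, Set.left_mem_Icc.mpr hab.le, ?_⟩
    rw [h0, zero_div, zero_mul, hxi]
    exact hξzero i
  · have hxne : ∀ i, x ≠ ξ i := fun i hxi =>
      h0 (Finset.prod_eq_zero (Finset.mem_univ i) (by rw [hxi, sub_self]))
    have hξinj : Function.Injective ξ := by
      intro i j hij
      by_contra hne
      have hd := hdisj i j hne
      have : ξ i ∈ Set.Ioo (lo i) (hi i) ∩ Set.Ioo (lo j) (hi j) :=
        ⟨hξmem i, hij ▸ hξmem j⟩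
      rw [hd] at this
      exact this
    set W : Polynomial ℝ := ∏ i, (X - C (ξ i)) with hW
    have hWeval : ∀ z, W.eval z = ∏ i, (z - ξ i) := by
      intro z; simp [hW, eval_prod]
    set Cc : ℝ := (f x - p.eval x) / (∏ i, (x - ξ i)) with hCc
    set q : Polynomial ℝ := p + C Cc * W with hq
    have hzero : ∀ z, (z = x ∨ ∃ i, z = ξ i) → f z - q.eval z = 0 := by
      intro z hz
      rcases hz with rfl | ⟨i, rfl⟩
      · rw [hq]
        simp only [eval_add, eval_mul, eval_C, hWeval, hCc]
        field_simp
        ring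
      · have hWz : W.eval (ξ i) = 0 := by
          rw [hWeval]
          exact Finset.prod_eq_zero (Finset.mem_univ i) (sub_self _)
        rw [hq]
        simp only [eval_add, eval_mul, eval_C, hWz, mul_zero, add_zero]
        exact hξzero i
    set T : Finset ℝ := insert x (Finset.image ξ Finset.univ) with hT
    have hcard : T.card = (m + 1) + 1 := by
      rw [hT, Finset.card_insert_of_notMem, Finset.card_image_of_injective _ hξinj,
        Finset.card_univ, Fintype.card_fin]
      simp only [Finset.mem_image]
      rintro ⟨i, -, hxi⟩
      exact hxne i hxi.symm
    set t : Fin (m + 2) → ℝ := fun i => (T.orderIsoOfFin hcard i : ℝ) with ht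
    have htmono : StrictMono t := fun i j hij => (T.orderIsoOfFin hcard).strictMono hij
    have htT : ∀ i, t i ∈ T := fun i => (T.orderIsoOfFin hcard i).2
    have htmem : ∀ i, t i ∈ Set.Icc a b := by
      intro i
      have hmem := htT i
      rw [hT, Finset.mem_insert] at hmem
      rcases hmem with h | h
      · rw [h]; exact hx
      · obtain ⟨j, -, hj⟩ := Finset.mem_image.mp h
        rw [← hj]
        exact (hsub j) (Set.Ioo_subset_Icc_self (hξmem j))
    have htzero : ∀ i, f (t i) - q.eval (t i) = 0 := by
      intro i
      apply hzero
      have hmem := htT i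
      rw [hT, Finset.mem_insert] at hmem
      rcases hmem with h | h
      · exact Or.inl h
      · obtain ⟨j, -, hj⟩ := Finset.mem_image.mp h
        exact Or.inr ⟨j, hj.symm⟩
    have hqc : ContDiffOn ℝ m (fun z => f z - q.eval z) (Set.Icc a b) :=
      hf.sub (poly_contDiff q m).contDiffOn
    have hA := transfer_A a b hab m f hf q
    have hqd : ∀ y ∈ Set.Ioo a b, DifferentiableWithinAt ℝ
        (iteratedDerivWithin m (fun z => f z - q.eval z) (Set.Icc a b)) (Set.Icc a b) y := by
      intro y hy
      have hdq : DifferentiableWithinAt ℝ (fun z => (derivative^[m] q).eval z)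
          (Set.Icc a b) y :=
        (Polynomial.differentiable _).differentiableAt.differentiableWithinAt
      refine ((hf' y hy).sub hdq).congr (fun z hz => hA m le_rfl z hz)
        (hA m le_rfl y (Set.Ioo_subset_Icc_self hy))
    obtain ⟨c, hcmem, hczero⟩ := iterated_rolle a b hab m _ hqc hqd t htmono htmem htzero
    have hB : iteratedDerivWithin (m + 1) (fun z => f z - q.eval z) (Set.Icc a b) c =
        iteratedDerivWithin (m + 1) f (Set.Icc a b) c - (derivative^[m + 1] q).eval c := by
      have hcI := Set.Ioo_subset_Icc_self hcmem
      rw [iteratedDerivWithin_succ]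
      rw [derivWithin_congr (fun z hz => hA m le_rfl z hz) (hA m le_rfl c hcI)]
      rw [derivWithin_fun_sub (hf' c hcmem)
        ((Polynomial.differentiable _).differentiableAt.differentiableWithinAt)]
      rw [← iteratedDerivWithin_succ]
      rw [(derivative^[m] q).derivWithin (hud c hcI), Function.iterate_succ_apply']
    have hpn : derivative^[m + 1] p = 0 := by
      apply Polynomial.iterate_derivative_eq_zero
      rcases eq_or_ne p 0 with rfl | hp0
      · simp
      · exact (Polynomial.natDegree_lt_iff_degree_lt hp0).mpr (Polynomial.mem_degreeLT.mp hp)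
    have hqderiv : (derivative^[m + 1] q).eval c = Cc * ((m + 1).factorial : ℝ) := by
      rw [hq, iter_derivative_add, hpn, zero_add, Polynomial.iterate_derivative_C_mul,
        hW, monic_prod_roots]
      simp
    have hkey : iteratedDerivWithin (m + 1) f (Set.Icc a b) c =
        Cc * ((m + 1).factorial : ℝ) := by
      have := hB
      rw [hczero, hqderiv] at this
      linarith
    refine ⟨c, Set.Ioo_subset_Icc_self hcmem, ?_⟩
    rw [hkey, hCc]
    have hfac : ((m + 1).factorial : ℝ) ≠ 0 := Nat.cast_ne_zero.mpr (Nat.factorial_ne_zero _)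
    field_simp
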